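/- Let O be a point of R^d and let Q_1, ..., Q_{d+1} be nonempty finite sets in R^d such that the family consisting of {O}, conv(Q_1), ..., conv(Q_{d+1}) is separated. Then either every d-dimensional simplex with exactly one vertex in each Q_i contains O in its interior, or no such simplex contains O in its closure. -/

import Mathlib

/-- A `(d+1)`-tuple of sets in `ℝᵈ` is separated if, for every `j` with
`1 ≤ j ≤ d` and every partition of the tuple into `j` and `d+1-j` sets, some
affine hyperplane strictly separates the union of the first group from the union
of the second group. -/
def SeparatedTuple (d : ℕ) (C : Fin (d + 1) → Set (EuclideanSpace ℝ (Fin d))) : Prop :=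
  ∀ I : Finset (Fin (d + 1)), 1 ≤ I.card → I.card ≤ d →
    ∃ (f : EuclideanSpace ℝ (Fin d) →L[ℝ] ℝ) (c : ℝ), f ≠ 0 ∧
      (∀ i ∈ I, ∀ x ∈ C i, f x < c) ∧ (∀ i ∉ I, ∀ x ∈ C i, c < f x)

/-- A family of at least `d+1` sets in `ℝᵈ` is separated if every `(d+1)`-tuple
of its members is separated. -/
def SeparatedFamily (d : ℕ) {ι : Type*} (C : ι → Set (EuclideanSpace ℝ (Fin d))) : Prop :=
  ∀ g : Fin (d + 1) → ι, Function.Injective g → SeparatedTuple d (C ∘ g)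

/-! ### Auxiliary lemmas -/

/-- Any transversal of a separated family of `d+2` sets, taking one point in each of
`d+1` of the sets, is affinely independent. -/
lemma sep_indep {d : ℕ} {C : Fin (d + 2) → Set (EuclideanSpace ℝ (Fin d))}
    (hsep : SeparatedFamily d C) (h : Fin (d + 1) → Fin (d + 2))
    (hinj : Function.Injective h) {p : Fin (d + 1) → EuclideanSpace ℝ (Fin d)}
    (hp : ∀ i, p i ∈ C (h i)) : AffineIndependent ℝ p := by
  classical
  rw [affineIndependent_iff]
  intro s w hw0 hcomb
  by_contra hne
  push_neg at hne
  obtain ⟨e, hes, hwe⟩ := hne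
  have hposex : ∃ i ∈ s, 0 < w i := by
    by_contra hall
    push_neg at hall
    have hlt : ∑ i ∈ s, w i < ∑ i ∈ s, (0 : ℝ) :=
      Finset.sum_lt_sum hall ⟨e, hes, lt_of_le_of_ne (hall e hes) hwe⟩
    rw [hw0, Finset.sum_const_zero] at hlt
    exact lt_irrefl _ hlt
  have hnegex : ∃ j ∈ s, w j < 0 := by
    by_contra hall
    push_neg at hall
    obtain ⟨i0, hi0, hi0pos⟩ := hposex
    have hlt : ∑ i ∈ s, (0 : ℝ) < ∑ i ∈ s, w i :=
      Finset.sum_lt_sum hall ⟨i0, hi0, hi0pos⟩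
    rw [hw0, Finset.sum_const_zero] at hlt
    exact lt_irrefl _ hlt
  obtain ⟨j0, hj0s, hj0⟩ := hnegex
  set I := s.filter (fun i => 0 < w i) with hI
  have hIcard1 : 1 ≤ I.card := by
    obtain ⟨i0, hi0, hpos⟩ := hposex
    exact Finset.card_pos.2 ⟨i0, Finset.mem_filter.2 ⟨hi0, hpos⟩⟩
  have hIcard2 : I.card ≤ d := by
    have hsub : I ⊆ Finset.univ.erase j0 := by
      intro i hi
      rcases Finset.mem_filter.1 hi with ⟨-, hpos⟩
      exact Finset.mem_erase.2 ⟨by rintro rfl; exact absurd hpos (by linarith),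
        Finset.mem_univ _⟩
    calc I.card ≤ (Finset.univ.erase j0).card := Finset.card_le_card hsub
      _ = d := by
        rw [Finset.card_erase_of_mem (Finset.mem_univ _)]
        simp
  obtain ⟨f, c, -, hltf, hgtf⟩ := hsep h hinj I hIcard1 hIcard2
  have hkey : ∑ i ∈ s, w i * f (p i) = 0 := by
    have h0 : f (∑ i ∈ s, w i • p i) = 0 := by rw [hcomb]; exact map_zero f
    rw [map_sum] at h0
    simpa [smul_eq_mul] using h0
  have hlt2 : ∑ i ∈ s, w i * f (p i) < ∑ i ∈ s, w i * c := by
    apply Finset.sum_lt_sum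
    · intro i hi
      by_cases hipos : 0 < w i
      · have hfc : f (p i) < c := hltf i (Finset.mem_filter.2 ⟨hi, hipos⟩) _ (hp i)
        exact le_of_lt (mul_lt_mul_of_pos_left hfc hipos)
      · have hiI : i ∉ I := fun hiI => hipos (Finset.mem_filter.1 hiI).2
        have hfc : c < f (p i) := hgtf i hiI _ (hp i)
        push_neg at hipos
        nlinarith
    · obtain ⟨i0, hi0, hpos⟩ := hposex
      exact ⟨i0, hi0, mul_lt_mul_of_pos_left
        (hltf i0 (Finset.mem_filter.2 ⟨hi0, hpos⟩) _ (hp i0)) hpos⟩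
  rw [hkey, ← Finset.sum_mul, hw0, zero_mul] at hlt2
  exact lt_irrefl 0 hlt2

/-- Build an affine basis of `ℝᵈ` from `d+1` affinely independent points. -/
noncomputable def mkBasis {d : ℕ} (u : Fin (d + 1) → EuclideanSpace ℝ (Fin d))
    (h : AffineIndependent ℝ u) : AffineBasis (Fin (d + 1)) ℝ (EuclideanSpace ℝ (Fin d)) :=
  ⟨u, h, by
    rw [h.affineSpan_eq_top_iff_card_eq_finrank_add_one]
    simp [finrank_euclideanSpace_fin]⟩

@[simp] lemma mkBasis_coe {d : ℕ} (u : Fin (d + 1) → EuclideanSpace ℝ (Fin d))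
    (h : AffineIndependent ℝ u) : ⇑(mkBasis u h) = u := rfl

/-- Evaluating an affine functional on a point written in barycentric coordinates. -/
lemma basis_apply_eq_sum {V : Type*} [NormedAddCommGroup V] [NormedSpace ℝ V] {n : ℕ}
    (b : AffineBasis (Fin n) ℝ V) {p : Fin n → V} (hp : ⇑b = p)
    (x : V) (φ : V →ᵃ[ℝ] ℝ) :
    φ x = ∑ i, b.coord i x * φ (p i) := by
  subst hp
  conv_lhs => rw [← b.affineCombination_coord_eq_self x]
  rw [Finset.map_affineCombination _ _ _ (b.sum_coord_apply_eq_one x) φ,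
    Finset.univ.affineCombination_eq_linear_combination _ _ (b.sum_coord_apply_eq_one x)]
  simp [smul_eq_mul]

/-- If a barycentric coordinate of `x` vanishes then `x` lies in the affine span of
the remaining points of the basis. -/
lemma mem_span_of_coord_eq_zero {V : Type*} [NormedAddCommGroup V] [NormedSpace ℝ V] {n : ℕ}
    (b : AffineBasis (Fin n) ℝ V) {i : Fin n} {x : V} (hx : b.coord i x = 0) :
    x ∈ affineSpan ℝ (⇑b '' {j | j ≠ i}) := by
  classical
  have hsum := b.sum_coord_apply_eq_one x
  have hrep := b.affineCombination_coord_eq_self x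
  set w : Fin n → ℝ := fun j => b.coord j x with hw
  have hind : Set.indicator ↑(Finset.univ.erase i) w = w := by
    funext j
    by_cases hj : j = i
    · subst hj
      simp [Set.indicator, hx, hw]
    · simp [Set.indicator, hj]
  have h1 : (Finset.univ.erase i).affineCombination ℝ ⇑b w = x := by
    rw [Finset.affineCombination_indicator_subset w ⇑b
      (Finset.subset_univ (Finset.univ.erase i)), hind]
    exact hrep
  have h2 : ∑ j ∈ Finset.univ.erase i, w j + w i = ∑ j, w j :=
    Finset.sum_erase_add _ _ (Finset.mem_univ i)
  have hwi : w i = 0 := hx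
  rw [hwi, add_zero, hsum] at h2
  have h3 := Finset.affineCombination_map (k := ℝ)
    (s₂ := (Finset.univ.subtype (fun j => j ≠ i)))
    (Function.Embedding.subtype (fun j => j ≠ i)) w ⇑b
  rw [Finset.subtype_map, Finset.filter_ne'] at h3
  have h4 : ∑ j ∈ Finset.univ.subtype (fun j => j ≠ i),
      (w ∘ (Function.Embedding.subtype (fun j => j ≠ i))) j = 1 := by
    have h4' : ∑ j ∈ Finset.univ.subtype (fun j => j ≠ i),
        (w ∘ (Function.Embedding.subtype (fun j => j ≠ i))) j
        = ∑ j ∈ (Finset.univ.subtype (fun j => j ≠ i)).map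
            (Function.Embedding.subtype (fun j => j ≠ i)), w j :=
      (Finset.sum_map _ _ _).symm
    rw [h4', Finset.subtype_map, Finset.filter_ne']
    exact h2
  have h5 := affineCombination_mem_affineSpan h4
    (⇑b ∘ (Function.Embedding.subtype (fun j => j ≠ i)))
  rw [← h3, h1] at h5
  refine affineSpan_mono ℝ ?_ h5
  rintro _ ⟨⟨a, ha⟩, rfl⟩
  exact ⟨a, ha, rfl⟩

/-- Crossing lemma: an affine functional changing signs on a convex set vanishes
somewhere on the set. -/
lemma exists_zero_on_segment {V : Type*} [NormedAddCommGroup V] [NormedSpace ℝ V]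
    {s : Set V} (hs : Convex ℝ s) {a b : V} (ha : a ∈ s) (hb : b ∈ s)
    (φ : V →ᵃ[ℝ] ℝ) (hpa : 0 < φ a) (hpb : φ b < 0) : ∃ x ∈ s, φ x = 0 := by
  set t := φ a / (φ a - φ b) with ht
  have hd : 0 < φ a - φ b := by linarith
  refine ⟨AffineMap.lineMap a b t, ?_, ?_⟩
  · apply hs.segment_subset ha hb
    rw [segment_eq_image_lineMap]
    exact ⟨t, ⟨le_of_lt (div_pos hpa hd), by rw [div_le_one hd]; linarith⟩, rfl⟩
  · rw [AffineMap.apply_lineMap, AffineMap.lineMap_apply_module, smul_eq_mul, smul_eq_mul, ht]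
    field_simp
    ring

section Main

variable {d : ℕ} {O : EuclideanSpace ℝ (Fin d)}
  {Q : Fin (d + 1) → Finset (EuclideanSpace ℝ (Fin d))}

variable (hsep : SeparatedFamily d
  (Fin.cons {O} (fun i => convexHull ℝ (Q i : Set (EuclideanSpace ℝ (Fin d)))) :
    Fin (d + 2) → Set (EuclideanSpace ℝ (Fin d))))

include hsep

/-- A transversal of the convex hulls is affinely independent. -/
lemma indepT {u : Fin (d + 1) → EuclideanSpace ℝ (Fin d)}
    (hu : ∀ i, u i ∈ convexHull ℝ (Q i : Set (EuclideanSpace ℝ (Fin d)))) :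
    AffineIndependent ℝ u := by
  apply sep_indep hsep Fin.succ (Fin.succ_injective _)
  intro i
  simpa using hu i

/-- The point `O` together with `d` points of a transversal is affinely independent. -/
lemma indepO {u : Fin (d + 1) → EuclideanSpace ℝ (Fin d)}
    (hu : ∀ i, u i ∈ convexHull ℝ (Q i : Set (EuclideanSpace ℝ (Fin d))))
    (k : Fin (d + 1)) :
    AffineIndependent ℝ (Fin.cons O (u ∘ k.succAbove) : Fin (d + 1) → _) := by
  apply sep_indep hsep (Fin.cons 0 (Fin.succ ∘ k.succAbove))
  · rw [Fin.cons_injective_iff]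
    constructor
    · rintro ⟨m, hm⟩
      exact (Fin.succ_ne_zero _) hm
    · exact (Fin.succ_injective _).comp Fin.succAbove_right_injective
  · intro i
    induction i using Fin.cases with
    | zero => simp
    | succ m => simpa using hu (k.succAbove m)

/-- No barycentric coordinate of `O` with respect to a transversal basis vanishes. -/
lemma coord_ne_zero {u : Fin (d + 1) → EuclideanSpace ℝ (Fin d)}
    (hu : ∀ i, u i ∈ convexHull ℝ (Q i : Set (EuclideanSpace ℝ (Fin d))))
    (i : Fin (d + 1)) : (mkBasis u (indepT hsep hu)).coord i O ≠ 0 := by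
  intro h0
  have hsp := mem_span_of_coord_eq_zero _ h0
  rw [mkBasis_coe] at hsp
  have hind := indepO hsep hu i
  have hnot := hind.notMem_affineSpan_diff 0 Set.univ
  simp only [Fin.cons_zero] at hnot
  apply hnot
  refine affineSpan_mono ℝ ?_ hsp
  rintro _ ⟨j, hj, rfl⟩
  obtain ⟨m, hm⟩ := Fin.exists_succAbove_eq (show j ≠ i from hj)
  exact ⟨m.succ, ⟨Set.mem_univ _, by simp [Fin.succ_ne_zero]⟩, by simp [Fin.cons_succ, hm]⟩

/-- A point of `conv (Q k)` is not in the affine span of transversal points of the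
other sets. -/
lemma not_mem_span1 {u : Fin (d + 1) → EuclideanSpace ℝ (Fin d)}
    (hu : ∀ i, u i ∈ convexHull ℝ (Q i : Set (EuclideanSpace ℝ (Fin d))))
    (k : Fin (d + 1)) {x : EuclideanSpace ℝ (Fin d)}
    (hx : x ∈ convexHull ℝ (Q k : Set (EuclideanSpace ℝ (Fin d)))) :
    x ∉ affineSpan ℝ (u '' {j | j ≠ k}) := by
  intro hmem
  classical
  have hu2 : ∀ i, Function.update u k x i ∈
      convexHull ℝ (Q i : Set (EuclideanSpace ℝ (Fin d))) := by
    intro i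
    by_cases h : i = k
    · subst h; simpa using hx
    · rw [Function.update_of_ne h]; exact hu i
  have hind := indepT hsep hu2
  have hnot := hind.notMem_affineSpan_diff k Set.univ
  rw [Function.update_self] at hnot
  apply hnot
  refine affineSpan_mono ℝ ?_ hmem
  rintro _ ⟨j, hj, rfl⟩
  exact ⟨j, ⟨Set.mem_univ _, by simpa using hj⟩, Function.update_of_ne hj x u⟩

/-- A point of `conv (Q k)` is not in the affine span of `O` together with transversal
points of the sets other than `Q j` and `Q k`. -/
lemma not_mem_span2 {u : Fin (d + 1) → EuclideanSpace ℝ (Fin d)}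
    (hu : ∀ i, u i ∈ convexHull ℝ (Q i : Set (EuclideanSpace ℝ (Fin d))))
    {j k : Fin (d + 1)} (hjk : j ≠ k) {x : EuclideanSpace ℝ (Fin d)}
    (hx : x ∈ convexHull ℝ (Q k : Set (EuclideanSpace ℝ (Fin d)))) :
    x ∉ affineSpan ℝ (insert O (u '' {i | i ≠ j ∧ i ≠ k})) := by
  intro hmem
  classical
  set u2 := Function.update u k x with hu2def
  have hu2 : ∀ i, u2 i ∈ convexHull ℝ (Q i : Set (EuclideanSpace ℝ (Fin d))) := by
    intro i
    by_cases h : i = k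
    · subst h; simpa [hu2def] using hx
    · rw [hu2def, Function.update_of_ne h]; exact hu i
  have hind := indepO hsep hu2 j
  obtain ⟨mk, hmk⟩ := Fin.exists_succAbove_eq (Ne.symm hjk)
  have hnot := hind.notMem_affineSpan_diff mk.succ Set.univ
  have hval : (Fin.cons O (u2 ∘ j.succAbove) : Fin (d + 1) → _) mk.succ = x := by
    simp only [Fin.cons_succ, Function.comp_apply, hu2def]
    rw [hmk]
    exact Function.update_self _ _ _
  rw [hval] at hnot
  apply hnot
  refine affineSpan_mono ℝ ?_ hmem
  rintro y (rfl | ⟨i, ⟨hij, hik⟩, rfl⟩)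
  · exact ⟨0, ⟨Set.mem_univ _, by simp [(Fin.succ_ne_zero mk).symm]⟩, by simp⟩
  · obtain ⟨m, hm⟩ := Fin.exists_succAbove_eq hij
    refine ⟨m.succ, ⟨Set.mem_univ _, ?_⟩, ?_⟩
    · have hmm : m ≠ mk := by
        intro h
        exact hik (by rw [← hm, h, hmk])
      simpa using fun h => hmm (Fin.succ_injective _ h)
    · simp only [Fin.cons_succ, Function.comp_apply, hu2def]
      rw [hm]
      exact Function.update_of_ne hik x u

/-- `O` lies in the interior of the simplex on a transversal iff all its barycentric
coordinates are positive. -/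
lemma interior_mem_iff {u : Fin (d + 1) → EuclideanSpace ℝ (Fin d)}
    (hu : ∀ i, u i ∈ convexHull ℝ (Q i : Set (EuclideanSpace ℝ (Fin d)))) :
    O ∈ interior (convexHull ℝ (Set.range u)) ↔
      ∀ i, 0 < (mkBasis u (indepT hsep hu)).coord i O := by
  have hcoe : Set.range ⇑(mkBasis u (indepT hsep hu)) = Set.range u := by
    rw [mkBasis_coe]
  rw [← hcoe, (mkBasis u (indepT hsep hu)).interior_convexHull]
  exact Iff.rfl

/-- Swap lemma: changing a transversal in one coordinate preserves positivity of all
barycentric coordinates of `O`. -/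
lemma swap_pos {u u' : Fin (d + 1) → EuclideanSpace ℝ (Fin d)}
    (hu : ∀ i, u i ∈ convexHull ℝ (Q i : Set (EuclideanSpace ℝ (Fin d))))
    (hu' : ∀ i, u' i ∈ convexHull ℝ (Q i : Set (EuclideanSpace ℝ (Fin d))))
    (k : Fin (d + 1)) (hagree : ∀ i, i ≠ k → u i = u' i)
    (hO : ∀ i, 0 < (mkBasis u (indepT hsep hu)).coord i O) :
    ∀ i, 0 < (mkBasis u' (indepT hsep hu')).coord i O := by
  classical
  set b := mkBasis u (indepT hsep hu) with hbdef
  set b' := mkBasis u' (indepT hsep hu') with hb'def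
  have hbu : ⇑b = u := rfl
  have hb'u : ⇑b' = u' := rfl
  have hqind : AffineIndependent ℝ (Fin.cons O (u ∘ k.succAbove) : Fin (d + 1) → _) :=
    indepO hsep hu k
  set B := mkBasis _ hqind with hBdef
  have hB0 : B 0 = O := by rw [hBdef, mkBasis_coe, Fin.cons_zero]
  have hBs : ∀ m, B m.succ = u (k.succAbove m) := by
    intro m
    rw [hBdef, mkBasis_coe, Fin.cons_succ]
    rfl
  -- Part 1: the k-th coordinate of `O` w.r.t. `u'` is positive.
  have hgO : B.coord 0 O = 1 := by rw [← hB0]; exact B.coord_apply_eq 0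
  have hgu : ∀ i, i ≠ k → B.coord 0 (u i) = 0 := by
    intro i hik
    obtain ⟨m, hm⟩ := Fin.exists_succAbove_eq hik
    rw [← hm, ← hBs m]
    exact B.coord_apply_ne (Fin.succ_ne_zero m).symm
  have hgu' : ∀ i, i ≠ k → B.coord 0 (u' i) = 0 := fun i hik => by
    rw [← hagree i hik]; exact hgu i hik
  have heq1 : b.coord k O * B.coord 0 (u k) = 1 := by
    have h1 : ∑ i, b.coord i O * B.coord 0 (u i) = 1 :=
      (basis_apply_eq_sum b hbu O (B.coord 0)).symm.trans hgO
    have hsingle : ∑ i, b.coord i O * B.coord 0 (u i)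
        = b.coord k O * B.coord 0 (u k) := by
      apply Finset.sum_eq_single_of_mem k (Finset.mem_univ k)
      intro i _ hik
      rw [hgu i hik, mul_zero]
    rw [← hsingle]
    exact h1
  have heq1' : b'.coord k O * B.coord 0 (u' k) = 1 := by
    have h1 : ∑ i, b'.coord i O * B.coord 0 (u' i) = 1 :=
      (basis_apply_eq_sum b' hb'u O (B.coord 0)).symm.trans hgO
    have hsingle : ∑ i, b'.coord i O * B.coord 0 (u' i)
        = b'.coord k O * B.coord 0 (u' k) := by
      apply Finset.sum_eq_single_of_mem k (Finset.mem_univ k)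
      intro i _ hik
      rw [hgu' i hik, mul_zero]
    rw [← hsingle]
    exact h1
  have hguk : 0 < B.coord 0 (u k) := by nlinarith [hO k, heq1]
  have hck' : 0 < b'.coord k O := by
    rcases lt_trichotomy (b'.coord k O) 0 with hneg | h0 | hpos
    · exfalso
      have hguk' : B.coord 0 (u' k) < 0 := by nlinarith [heq1']
      obtain ⟨x, hxs, hx0⟩ := exists_zero_on_segment (convex_convexHull ℝ _)
        (hu k) (hu' k) (B.coord 0) hguk hguk'
      apply not_mem_span1 hsep hu k hxs
      have hsp := mem_span_of_coord_eq_zero B hx0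
      refine affineSpan_mono ℝ ?_ hsp
      rintro _ ⟨l, hl, rfl⟩
      obtain ⟨m, rfl⟩ := Fin.exists_succ_eq_of_ne_zero (show l ≠ 0 from hl)
      exact ⟨k.succAbove m, Fin.succAbove_ne k m, (hBs m).symm⟩
    · exact absurd h0 (coord_ne_zero hsep hu' k)
    · exact hpos
  -- Part 2: the other coordinates.
  intro i
  by_cases hik : i = k
  · subst hik; exact hck'
  obtain ⟨mj, hmj⟩ := Fin.exists_succAbove_eq hik
  have hhO : B.coord mj.succ O = 0 := by
    rw [← hB0]; exact B.coord_apply_ne (Fin.succ_ne_zero mj)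
  have hhuj : B.coord mj.succ (u i) = 1 := by
    rw [← hmj, ← hBs mj]; exact B.coord_apply_eq _
  have hhul : ∀ l, l ≠ k → l ≠ i → B.coord mj.succ (u l) = 0 := by
    intro l hlk hli
    obtain ⟨m, hm⟩ := Fin.exists_succAbove_eq hlk
    rw [← hm, ← hBs m]
    apply B.coord_apply_ne
    intro hcontr
    have hmm : mj = m := Fin.succ_injective _ hcontr
    exact hli (by rw [← hm, ← hmm, hmj])
  have hsum2 : ∀ (w : Fin (d + 1) → EuclideanSpace ℝ (Fin d))
      (bw : AffineBasis (Fin (d + 1)) ℝ (EuclideanSpace ℝ (Fin d))) (hbw : ⇑bw = w)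
      (hwag : ∀ l, l ≠ k → w l = u l),
      bw.coord i O + bw.coord k O * B.coord mj.succ (w k) = 0 := by
    intro w bw hbw hwag
    have h1 : (0 : ℝ) = ∑ l, bw.coord l O * B.coord mj.succ (w l) :=
      hhO ▸ basis_apply_eq_sum bw hbw O (B.coord mj.succ)
    have hsub : ({i, k} : Finset (Fin (d + 1))) ⊆ Finset.univ := Finset.subset_univ _
    have hzero : ∀ l ∈ Finset.univ, l ∉ ({i, k} : Finset (Fin (d + 1))) →
        bw.coord l O * B.coord mj.succ (w l) = 0 := by
      intro l _ hl
      simp only [Finset.mem_insert, Finset.mem_singleton] at hl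
      push_neg at hl
      rw [hwag l hl.2, hhul l hl.2 hl.1, mul_zero]
    rw [← Finset.sum_subset hsub hzero, Finset.sum_pair hik] at h1
    rw [hwag i hik, hhuj, mul_one] at h1
    linarith
  have e_u : b.coord i O + b.coord k O * B.coord mj.succ (u k) = 0 :=
    hsum2 u b hbu (fun _ _ => rfl)
  have e_u' : b'.coord i O + b'.coord k O * B.coord mj.succ (u' k) = 0 :=
    hsum2 u' b' hb'u (fun l hl => (hagree l hl).symm)
  by_contra hneg
  push_neg at hneg
  have hlt0 : b'.coord i O < 0 :=
    lt_of_le_of_ne hneg (coord_ne_zero hsep hu' i)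
  have hhk : B.coord mj.succ (u k) < 0 := by nlinarith [hO i, hO k, e_u]
  have hhk' : 0 < B.coord mj.succ (u' k) := by nlinarith [hck', e_u']
  obtain ⟨x, hxs, hx0⟩ := exists_zero_on_segment (convex_convexHull ℝ _)
    (hu' k) (hu k) (B.coord mj.succ) hhk' hhk
  apply not_mem_span2 hsep hu hik hxs
  have hsp := mem_span_of_coord_eq_zero B hx0
  refine affineSpan_mono ℝ ?_ hsp
  rintro _ ⟨l, hl, rfl⟩
  rcases eq_or_ne l 0 with rfl | hl0
  · rw [hB0]; exact Set.mem_insert _ _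
  · obtain ⟨m, rfl⟩ := Fin.exists_succ_eq_of_ne_zero hl0
    refine Set.mem_insert_iff.mpr (Or.inr ⟨k.succAbove m, ⟨?_, Fin.succAbove_ne k m⟩,
      (hBs m).symm⟩)
    intro hcon
    apply hl
    have hmm : m = mj := Fin.succAbove_right_injective (by rw [hcon, hmj])
    rw [hmm]

end Main

/-- If the family `{O}, conv (Q 0), …, conv (Q d)` is separated, then either every
`d`-dimensional simplex with exactly one vertex in each `Q i` contains `O` in its
interior, or no such simplex contains `O` in its closure. -/
theorem separated_zero_or_all_simplices (d : ℕ) (O : EuclideanSpace ℝ (Fin d))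
    (Q : Fin (d + 1) → Finset (EuclideanSpace ℝ (Fin d))) (hne : ∀ i, (Q i).Nonempty)
    (hsep : SeparatedFamily d
      (Fin.cons {O} (fun i => convexHull ℝ (Q i : Set (EuclideanSpace ℝ (Fin d)))) :
        Fin (d + 2) → Set (EuclideanSpace ℝ (Fin d)))) :
    (∀ v : Fin (d + 1) → EuclideanSpace ℝ (Fin d),
        (∀ i, v i ∈ Q i) → AffineIndependent ℝ v →
          O ∈ interior (convexHull ℝ (Set.range v))) ∨
      (∀ v : Fin (d + 1) → EuclideanSpace ℝ (Fin d),
        (∀ i, v i ∈ Q i) → AffineIndependent ℝ v →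
          O ∉ closure (convexHull ℝ (Set.range v))) := by
  classical
  by_cases hex : ∃ v : Fin (d + 1) → EuclideanSpace ℝ (Fin d),
      (∀ i, v i ∈ Q i) ∧ O ∈ closure (convexHull ℝ (Set.range v))
  · left
    obtain ⟨v₀, hv₀, hcl⟩ := hex
    have hu₀ : ∀ i, v₀ i ∈ convexHull ℝ (Q i : Set (EuclideanSpace ℝ (Fin d))) :=
      fun i => subset_convexHull ℝ _ (by exact_mod_cast hv₀ i)
    have hmem : O ∈ convexHull ℝ (Set.range v₀) := by
      rwa [((Set.finite_range v₀).isClosed_convexHull ℝ).closure_eq] at hcl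
    have hpos0 : ∀ i, 0 < (mkBasis v₀ (indepT hsep hu₀)).coord i O := by
      intro i
      have hnn : 0 ≤ (mkBasis v₀ (indepT hsep hu₀)).coord i O := by
        have h2 : O ∈ convexHull ℝ (Set.range ⇑(mkBasis v₀ (indepT hsep hu₀))) := by
          rwa [mkBasis_coe]
        rw [(mkBasis v₀ (indepT hsep hu₀)).convexHull_eq_nonneg_coord] at h2
        exact h2 i
      exact lt_of_le_of_ne hnn (Ne.symm (coord_ne_zero hsep hu₀ i))
    intro v hv _
    have huv : ∀ n : ℕ, ∀ i : Fin (d + 1),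
        (if (i : ℕ) < n then v i else v₀ i) ∈
          convexHull ℝ (Q i : Set (EuclideanSpace ℝ (Fin d))) := by
      intro n i
      by_cases h : (i : ℕ) < n
      · simp only [h, if_true]
        exact subset_convexHull ℝ _ (by exact_mod_cast hv i)
      · simp only [h, if_false]
        exact hu₀ i
    have key : ∀ n : ℕ, O ∈ interior (convexHull ℝ
        (Set.range fun i : Fin (d + 1) => if (i : ℕ) < n then v i else v₀ i)) := by
      intro n
      induction n with
      | zero =>
        have h0 : (fun i : Fin (d + 1) => if (i : ℕ) < 0 then v i else v₀ i) = v₀ :=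
          funext fun i => by simp
        rw [h0]
        exact (interior_mem_iff hsep hu₀).mpr hpos0
      | succ n ih =>
        by_cases hn : n < d + 1
        · set k : Fin (d + 1) := ⟨n, hn⟩ with hk
          apply (interior_mem_iff hsep (huv (n + 1))).mpr
          apply swap_pos hsep (huv n) (huv (n + 1)) k
          · intro i hikne
            have hine : (i : ℕ) ≠ n := fun h => hikne (Fin.ext h)
            by_cases h2 : (i : ℕ) < n
            · simp only [h2, if_true, Nat.lt_succ_of_lt h2]
            · have h3 : ¬ (i : ℕ) < n + 1 := by omega
              simp only [h2, h3, if_false]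
          · exact (interior_mem_iff hsep (huv n)).mp ih
        · have heq : (fun i : Fin (d + 1) => if (i : ℕ) < n + 1 then v i else v₀ i)
              = (fun i : Fin (d + 1) => if (i : ℕ) < n then v i else v₀ i) := by
            funext i
            have h1 : (i : ℕ) < n := by have := i.isLt; omega
            have h2 : (i : ℕ) < n + 1 := by omega
            simp [h1, h2]
          rw [heq]
          exact ih
    have hfin : v = fun i : Fin (d + 1) => if (i : ℕ) < d + 1 then v i else v₀ i :=
      funext fun i => by simp [i.isLt]
    rw [hfin]
    exact key (d + 1)
  · right
    intro v hv _ hcl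
    exact hex ⟨v, hv, hcl⟩
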